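/- Let η ≥ 1 and ζ ≥ max(η,α), and let q, s ≥ 0. Let G satisfy conditions (i)–(v), and let 𝒯 be a 2-cleaned (ζ,η)-template array in G with sequence (Y_i,H_i) (1 ≤ i ≤ n) that admits a privatization Π. Let B_1,…,B_n be a shadowing of 𝒯 of degree at most s relative to U(𝒯)\Π. Let 1 ≤ i ≤ n, and let {D_j : j ∈ J} be a bunch of daisies, each with root in H_i and with V(D_j) ∩ Π = ∅, with |J| = 2qζβ(1+(q+s)(δ²+1)+2δ+δτ)τ. Then there exist a vertex u ∈ H_i ∪ B_i and J' ⊆ J with |J'| = q such that for each j ∈ J', u is adjacent to the eye of D_j and nonadjacent to the petals of D_j. -/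
import Mathlib



/-- Vertices of the tree `T(δ)`: a handle, δ (1,δ)-brooms and δ (2,δ)-brooms. -/
inductive TVert (δ : ℕ) : Type
  | handle : TVert δ
  | stem1 : Fin δ → TVert δ
  | leaf1 : Fin δ → Fin δ → TVert δ
  | stem2 : Fin δ → TVert δ
  | end2 : Fin δ → TVert δ
  | leaf2 : Fin δ → Fin δ → TVert δ

/-- The tree `T(δ)`, formed from δ (1,δ)-brooms and δ (2,δ)-brooms by identifying handles. -/
def TGraph (δ : ℕ) : SimpleGraph (TVert δ) :=
  SimpleGraph.fromRel (fun u v =>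
    (∃ i, u = TVert.handle ∧ v = TVert.stem1 i) ∨
    (∃ i m, u = TVert.stem1 i ∧ v = TVert.leaf1 i m) ∨
    (∃ j, u = TVert.handle ∧ v = TVert.stem2 j) ∨
    (∃ j, u = TVert.stem2 j ∧ v = TVert.end2 j) ∨
    (∃ j m, u = TVert.end2 j ∧ v = TVert.leaf2 j m))

/-- `G` is `T(δ)`-free: no induced subgraph of `G` is isomorphic to `T(δ)`. -/
def TdeltaFree (δ : ℕ) {V : Type} (G : SimpleGraph V) : Prop :=
  IsEmpty (SimpleGraph.Embedding (TGraph δ) G)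

/-- `N²[v]`: the set of vertices at distance at most 2 from `v`. -/
def Ball2 {V : Type} (G : SimpleGraph V) (v : V) : Set V :=
  {u | u = v ∨ G.Adj v u ∨ ∃ w, G.Adj v w ∧ G.Adj w u}

/-- `χ²(G) ≤ τ`: every ball of radius 2 induces a subgraph of chromatic number at most `τ`. -/
def ChiTwoLe {V : Type} (G : SimpleGraph V) (τ : ℕ) : Prop :=
  ∀ v : V, (G.induce (Ball2 G v)).chromaticNumber ≤ (τ : ℕ∞)

/-- `X` is matching-covered in `G`. -/
def MatchingCovered {V : Type} (G : SimpleGraph V) (X : Set V) : Prop :=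
  ∀ x ∈ X, ∃ y, y ∉ X ∧ G.Adj x y ∧ ∀ x' ∈ X, G.Adj x' y → x' = x

/-- `A` lists the parts of an `(a,b)`-core: `b` pairwise disjoint stable sets of size `a`,
complete to each other. -/
def IsCoreParts {V : Type} (G : SimpleGraph V) (a : ℕ) {b : ℕ} (A : Fin b → Set V) : Prop :=
  (∀ i, (A i).encard = (a : ℕ∞)) ∧
  (∀ i j, i ≠ j → Disjoint (A i) (A j)) ∧
  (∀ i, ∀ x ∈ A i, ∀ y ∈ A i, ¬ G.Adj x y) ∧
  (∀ i j, i ≠ j → ∀ x ∈ A i, ∀ y ∈ A j, G.Adj x y)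

/-- `G` admits an `(a,b)`-core. -/
def HasCore {V : Type} (G : SimpleGraph V) (a b : ℕ) : Prop :=
  ∃ A : Fin b → Set V, IsCoreParts G a A

/-- `v` is dense to the core with parts `A`: `v` is outside the core and has at least `α`
neighbours in each part. -/
def DenseTo {V : Type} (G : SimpleGraph V) (α : ℕ) {b : ℕ} (A : Fin b → Set V) (v : V) : Prop :=
  v ∉ (⋃ i, A i) ∧ ∀ i, (α : ℕ∞) ≤ (A i ∩ G.neighborSet v).encard

/-- `v` is `η`-mixed on the core with parts `A`. -/
def MixedOn {V : Type} (G : SimpleGraph V) (α η : ℕ) {b : ℕ} (A : Fin b → Set V) (v : V) : Prop :=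
  ¬ DenseTo G α A v ∧ ∃ i, (η : ℕ∞) ≤ (A i ∩ G.neighborSet v).encard

/-- Conditions (i)–(v) of the paper, for fixed `τ, α, δ, β, θ`. -/
def Conditions (τ α δ β : ℕ) (θ : ℕ → ℕ) {V : Type} (G : SimpleGraph V) : Prop :=
  TdeltaFree δ G ∧
  ChiTwoLe G τ ∧
  (∀ X : Set V, MatchingCovered G X → (G.induce X).chromaticNumber ≤ (τ : ℕ∞)) ∧
  (∀ a : ℕ, 1 ≤ a → (θ a : ℕ∞) < G.chromaticNumber → HasCore G a β) ∧
  ¬ HasCore G α (β + 1)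

/-- A `(ζ,η)`-template array in `G`: a template sequence `(Y i, Hs i) (i : Fin n)` together
with a set `U`.  `A i` gives the parts of the core `Y i = ⋃ k, A i k`. -/
structure TemplateArray {V : Type} (G : SimpleGraph V) (α β ζ η : ℕ) (n : ℕ) where
  A : Fin n → Fin β → Set V
  Hs : Fin n → Set V
  U : Set V
  core : ∀ i, IsCoreParts G ζ (A i)
  core_subset : ∀ i, (⋃ k, A i k) ⊆ Hs i
  mixed : ∀ i, ∀ v ∈ Hs i, MixedOn G α η (A i) v
  H_disj : ∀ i j, i ≠ j → Disjoint (Hs i) (Hs j)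
  no_edge : ∀ i j : Fin n, i < j → ∀ u ∈ Hs i, ∀ y ∈ (⋃ k, A j k), ¬ G.Adj u y
  not_mixed : ∀ i j : Fin n, i < j → ∀ v ∈ Hs j, ¬ MixedOn G α η (A i) v
  U_not_H : ∀ v ∈ U, ∀ i, v ∉ Hs i
  U_not_mixed : ∀ v ∈ U, ∀ i, ¬ MixedOn G α η (A i) v
  U_nbr : ∀ v ∈ U, ∃ i, ∃ u ∈ Hs i, G.Adj v u

namespace TemplateArray

variable {V : Type} {G : SimpleGraph V} {α β ζ η n : ℕ}

/-- The core `Y_i` of the template array. -/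
def Y (T : TemplateArray G α β ζ η n) (i : Fin n) : Set V := ⋃ k, T.A i k

/-- `H(𝒯) = H_1 ∪ ⋯ ∪ H_n`. -/
def Hall (T : TemplateArray G α β ζ η n) : Set V := ⋃ i, T.Hs i

/-- `Y(𝒯) = Y_1 ∪ ⋯ ∪ Y_n`. -/
def Yall (T : TemplateArray G α β ζ η n) : Set V := ⋃ i, T.Y i

/-- `Z(𝒯) = H(𝒯) \ Y(𝒯)`. -/
def Zall (T : TemplateArray G α β ζ η n) : Set V := T.Hall \ T.Yall

/-- `V(𝒯) = H(𝒯) ∪ U(𝒯)`. -/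
def Vall (T : TemplateArray G α β ζ η n) : Set V := T.Hall ∪ T.U

/-- The template array is 1-cleaned: no vertex of `V(𝒯)` is dense to any `Y_i`. -/
def Cleaned1 (T : TemplateArray G α β ζ η n) : Prop :=
  ∀ i : Fin n, ∀ v ∈ T.Vall, ¬ DenseTo G α (T.A i) v

/-- The template array is 2-cleaned. -/
def Cleaned2 (T : TemplateArray G α β ζ η n) : Prop :=
  T.Cleaned1 ∧
  (∀ i j : Fin n, i ≠ j → ∀ u ∈ T.Hs i, ∀ w ∈ T.Hs j, ¬ G.Adj u w) ∧
  (∀ i : Fin n, ∀ u ∈ T.Hs i \ T.Y i, ∀ w ∈ T.Hs i \ T.Y i, ¬ G.Adj u w)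

/-- A privatization for the template array. -/
def Privatization (T : TemplateArray G α β ζ η n) (δ τ : ℕ) (P : Set V) : Prop :=
  P ⊆ T.U ∧
  (∃ M : Fin (δ * τ) → Set V, (⋃ i, M i) = P ∧ ∀ i, MatchingCovered G (M i)) ∧
  (∀ v ∈ P, (T.Zall ∩ G.neighborSet v).encard = 1 ∧ ∀ y ∈ T.Yall, ¬ G.Adj v y) ∧
  (∀ z ∈ T.Zall, (P ∩ G.neighborSet z).encard = ((δ * τ : ℕ) : ℕ∞))

/-- `B` is a shadowing of the template array. -/
def Shadowing (T : TemplateArray G α β ζ η n) (B : Fin n → Set V) : Prop :=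
  (∀ i, B i ⊆ T.U) ∧
  (∀ i j, i ≠ j → Disjoint (B i) (B j)) ∧
  (⋃ i, B i) = T.U ∧
  (∀ i, ∀ v ∈ B i, ∃ u ∈ T.Hs i, G.Adj v u)

/-- The shadowing `B` has degree at most `s` relative to `X`. -/
def DegreeLeRel (T : TemplateArray G α β ζ η n) (B : Fin n → Set V) (s : ℕ) (X : Set V) :
    Prop :=
  ∀ v ∈ T.Vall, ({i : Fin n | ∃ u ∈ B i ∩ X, G.Adj v u}).encard ≤ (s : ℕ∞)

/-- `(u, v, P)` is a daisy with root `u`, eye `v` and petal set `P`, with respect to the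
template array and the shadowing `B`. -/
def IsDaisy (T : TemplateArray G α β ζ η n) (δ : ℕ) (B : Fin n → Set V)
    (u v : V) (P : Set V) : Prop :=
  (∃ i, u ∈ T.Hs i ∧ ∃ j, j ≠ i ∧ P ⊆ B j) ∧
  v ∈ T.U ∧
  P.encard = (δ : ℕ∞) ∧
  u ∉ P ∧ v ∉ P ∧ u ≠ v ∧
  G.Adj u v ∧
  (∀ p ∈ P, G.Adj v p) ∧
  (∀ p ∈ P, ¬ G.Adj u p) ∧
  (∀ p ∈ P, ∀ q ∈ P, ¬ G.Adj p q)

/-- `{(u j, v j, P j) : j ∈ J}` is a bunch of daisies with all roots in `Hs i`. -/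
def IsBunch (T : TemplateArray G α β ζ η n) (δ : ℕ) (B : Fin n → Set V) (i : Fin n)
    (J : Set (Fin n)) (u v : Fin n → V) (P : Fin n → Set V) : Prop :=
  i ∉ J ∧
  (∀ j ∈ J, T.IsDaisy δ B (u j) (v j) (P j)) ∧
  (∀ j ∈ J, u j ∈ T.Hs i) ∧
  (∀ j ∈ J, P j ⊆ B j) ∧
  (∀ j ∈ J, ∀ j' ∈ J, j ≠ j' → Disjoint (P j ∪ {v j}) (P j' ∪ {v j'})) ∧
  (∀ j ∈ J, ∀ j' ∈ J, j ≠ j' → ∀ x ∈ P j ∪ {v j}, ∀ y ∈ P j' ∪ {v j'}, ¬ G.Adj x y) ∧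
  (∀ j ∈ J, ∀ j' ∈ J, j ≠ j' → ∀ p ∈ P j', ¬ G.Adj (u j) p)

end TemplateArray


section Aux
open Finset


/-- choose an injection from Fin k into a finset of card k -/
noncomputable def pickFin {α : Type*} (s : Finset α) {k : ℕ} (h : s.card = k) : Fin k → α :=
  fun t => (s.equivFin.symm (Fin.cast h.symm t) : α)

lemma pickFin_mem {α : Type*} (s : Finset α) {k : ℕ} (h : s.card = k) (t : Fin k) :
    pickFin s h t ∈ s := (s.equivFin.symm (Fin.cast h.symm t)).2

lemma pickFin_inj {α : Type*} (s : Finset α) {k : ℕ} (h : s.card = k) :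
    Function.Injective (pickFin s h) := by
  intro t t' ht
  have := Subtype.ext ht
  simpa using congrArg (Fin.cast h) (s.equivFin.symm.injective this)

/-- maximal-fiber pigeonhole -/
lemma exists_big_fiber {ι κ : Type*} [DecidableEq κ] (s : Finset ι) (f : ι → κ) (t : Finset κ)
    (ht : t.Nonempty) (hmaps : ∀ a ∈ s, f a ∈ t) :
    ∃ b ∈ t, s.card ≤ t.card * (s.filter (fun a => f a = b)).card := by
  obtain ⟨b, hb, hmax⟩ := t.exists_max_image (fun b => (s.filter (fun a => f a = b)).card) ht
  refine ⟨b, hb, ?_⟩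
  calc s.card = ∑ c ∈ t, (s.filter (fun a => f a = c)).card :=
        Finset.card_eq_sum_card_fiberwise hmaps
    _ ≤ t.card • (s.filter (fun a => f a = b)).card :=
        Finset.sum_le_card_nsmul _ _ _ (fun c hc => hmax c hc)
    _ = t.card * (s.filter (fun a => f a = b)).card := by rw [smul_eq_mul]



lemma sum_card_filter_comm {ι : Type*} (S : Finset ι) (p : ι → ι → Prop)
    [DecidableRel p] :
    ∑ a ∈ S, (S.filter (p a)).card = ∑ b ∈ S, (S.filter (fun x => p x b)).card := by
  simp only [Finset.card_filter]
  exact Finset.sum_comm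

/-- greedy independent set in a digraph with bounded out-degree -/
lemma digraph_indep {ι : Type*} [DecidableEq ι] (r : ι → ι → Prop) [DecidableRel r] (d : ℕ)
    (S : Finset ι)
    (hout : ∀ a ∈ S, (S.filter (fun b => r a b ∧ b ≠ a)).card ≤ d) :
    ∃ T ⊆ S, S.card ≤ (2 * d + 1) * T.card ∧
      ∀ a ∈ T, ∀ b ∈ T, a ≠ b → ¬ r a b := by
  classical
  induction S using Finset.strongInduction with
  | _ S ih =>
    rcases S.eq_empty_or_nonempty with rfl | hne
    · exact ⟨∅, by simp⟩
    · have hsum : ∑ a ∈ S, (S.filter (fun b => (r a b ∨ r b a) ∧ b ≠ a)).card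
          ≤ ∑ a ∈ S, 2 * d := by
        calc ∑ a ∈ S, (S.filter (fun b => (r a b ∨ r b a) ∧ b ≠ a)).card
            ≤ ∑ a ∈ S, ((S.filter (fun b => r a b ∧ b ≠ a)).card
              + (S.filter (fun b => r b a ∧ b ≠ a)).card) := by
              refine Finset.sum_le_sum (fun a _ => ?_)
              refine le_trans (Finset.card_le_card ?_) (Finset.card_union_le _ _)
              intro b hb
              simp only [mem_filter, mem_union] at hb ⊢
              tauto
          _ ≤ ∑ a ∈ S, 2 * d := by
              rw [Finset.sum_add_distrib]
              have h1 : ∑ a ∈ S, (S.filter (fun b => r a b ∧ b ≠ a)).card ≤ ∑ a ∈ S, d :=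
                Finset.sum_le_sum (fun a ha => hout a ha)
              have h2 : ∑ a ∈ S, (S.filter (fun b => r b a ∧ b ≠ a)).card
                  = ∑ b ∈ S, (S.filter (fun x => r b x ∧ b ≠ x)).card :=
                sum_card_filter_comm S (fun x y => r y x ∧ y ≠ x)
              have h2' : ∑ a ∈ S, (S.filter (fun b => r b a ∧ b ≠ a)).card ≤ ∑ a ∈ S, d := by
                rw [h2]
                refine Finset.sum_le_sum (fun b hb => ?_)
                refine le_trans (Finset.card_le_card ?_) (hout b hb)
                intro c hc
                simp only [mem_filter] at hc ⊢
                exact ⟨hc.1, hc.2.1, fun h => hc.2.2 h.symm⟩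
              calc _ ≤ ∑ a ∈ S, d + ∑ a ∈ S, d := Nat.add_le_add h1 h2'
                _ = ∑ a ∈ S, 2*d := by rw [← Finset.sum_add_distrib]; ring_nf
      obtain ⟨a, ha, hadeg⟩ : ∃ a ∈ S,
          (S.filter (fun b => (r a b ∨ r b a) ∧ b ≠ a)).card ≤ 2 * d := by
        by_contra hcon
        push_neg at hcon
        have : ∑ a ∈ S, 2 * d < ∑ a ∈ S, (S.filter (fun b => (r a b ∨ r b a) ∧ b ≠ a)).card :=
          Finset.sum_lt_sum_of_nonempty hne (fun a ha => hcon a ha)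
        omega
      set Rem := insert a (S.filter (fun b => (r a b ∨ r b a) ∧ b ≠ a)) with hRem
      have hSub : S \ Rem ⊂ S := by
        refine Finset.sdiff_ssubset ?_ ?_
        · exact Finset.insert_subset ha (Finset.filter_subset _ _)
        · exact ⟨a, Finset.mem_insert_self _ _⟩
      obtain ⟨T', hT'sub, hT'card, hT'ind⟩ := ih (S \ Rem) hSub (fun b hb => by
        refine le_trans (Finset.card_le_card ?_) (hout b (Finset.mem_sdiff.mp hb).1)
        intro c hc; simp only [mem_filter, Finset.mem_sdiff] at hc ⊢; tauto)
      refine ⟨insert a T', ?_, ?_, ?_⟩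
      · intro b hb
        rcases Finset.mem_insert.mp hb with rfl | hb
        · exact ha
        · exact (Finset.mem_sdiff.mp (hT'sub hb)).1
      · have hAnotin : a ∉ T' := fun h => by
          have := (Finset.mem_sdiff.mp (hT'sub h)).2
          simp [hRem] at this
        rw [Finset.card_insert_of_notMem hAnotin]
        have hRemcard : Rem.card ≤ 2 * d + 1 := by
          refine le_trans (Finset.card_insert_le _ _) ?_
          omega
        have hS : S.card ≤ (S \ Rem).card + Rem.card := by
          have : S ⊆ (S \ Rem) ∪ Rem := by
            intro x hx
            by_cases hxr : x ∈ Rem <;> simp [Finset.mem_sdiff, hx, hxr]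
          exact le_trans (Finset.card_le_card this) (Finset.card_union_le _ _)
        calc S.card ≤ (S \ Rem).card + (2*d+1) := by omega
          _ ≤ (2*d+1) * T'.card + (2*d+1) := by omega
          _ = (2*d+1) * (T'.card + 1) := by ring
      · intro x hx y hy hxy
        rcases Finset.mem_insert.mp hx with rfl | hx' <;>
          rcases Finset.mem_insert.mp hy with rfl | hy'
        · exact absurd rfl hxy
        · have hyS := (Finset.mem_sdiff.mp (hT'sub hy')).1
          have hy2 := (Finset.mem_sdiff.mp (hT'sub hy')).2
          intro hr
          exact hy2 (by simp only [hRem, Finset.mem_insert, mem_filter]; right; exact ⟨hyS, Or.inl hr, fun h => hxy h.symm⟩)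
        · have hxS := (Finset.mem_sdiff.mp (hT'sub hx')).1
          have hx2 := (Finset.mem_sdiff.mp (hT'sub hx')).2
          intro hr
          exact hx2 (by simp only [hRem, Finset.mem_insert, mem_filter]; right; exact ⟨hxS, Or.inr hr, hxy⟩)
        · exact hT'ind x hx' y hy' hxy
noncomputable def tgraph_embedding {V : Type} (G : SimpleGraph V) (δ : ℕ)
    (y : V) (a b e : Fin δ → V) (l1 l2 : Fin δ → Fin δ → V)
    (Aya : ∀ t, G.Adj y (a t))
    (Aal : ∀ t m, G.Adj (a t) (l1 t m))
    (Ayb : ∀ t, G.Adj y (b t))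
    (Abe : ∀ t, G.Adj (b t) (e t))
    (Ael : ∀ t m, G.Adj (e t) (l2 t m))
    (Nyl1 : ∀ t m, ¬ G.Adj y (l1 t m))
    (Nye : ∀ t, ¬ G.Adj y (e t))
    (Nyl2 : ∀ t m, ¬ G.Adj y (l2 t m))
    (Naa : ∀ t t', t ≠ t' → ¬ G.Adj (a t) (a t'))
    (Nab : ∀ t t', ¬ G.Adj (a t) (b t'))
    (Nae : ∀ t t', ¬ G.Adj (a t) (e t'))
    (Nal1 : ∀ t t' m, t ≠ t' → ¬ G.Adj (a t) (l1 t' m))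
    (Nal2 : ∀ t t' m, ¬ G.Adj (a t) (l2 t' m))
    (Nbb : ∀ t t', t ≠ t' → ¬ G.Adj (b t) (b t'))
    (Nbe : ∀ t t', t ≠ t' → ¬ G.Adj (b t) (e t'))
    (Nbl1 : ∀ t t' m, ¬ G.Adj (b t) (l1 t' m))
    (Nbl2 : ∀ t t' m, ¬ G.Adj (b t) (l2 t' m))
    (Nee : ∀ t t', t ≠ t' → ¬ G.Adj (e t) (e t'))
    (Nel1 : ∀ t t' m, ¬ G.Adj (e t) (l1 t' m))
    (Nel2 : ∀ t t' m, t ≠ t' → ¬ G.Adj (e t) (l2 t' m))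
    (Nl1l1 : ∀ t m t' m', t ≠ t' ∨ m ≠ m' → ¬ G.Adj (l1 t m) (l1 t' m'))
    (Nl1l2 : ∀ t m t' m', ¬ G.Adj (l1 t m) (l2 t' m'))
    (Nl2l2 : ∀ t m t' m', t ≠ t' ∨ m ≠ m' → ¬ G.Adj (l2 t m) (l2 t' m'))
    (Dya : ∀ t, y ≠ a t) (Dyb : ∀ t, y ≠ b t) (Dye : ∀ t, y ≠ e t)
    (Dyl1 : ∀ t m, y ≠ l1 t m) (Dyl2 : ∀ t m, y ≠ l2 t m)
    (Daa : Function.Injective a) (Dbb : Function.Injective b)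
    (Dab : ∀ t t', a t ≠ b t')
    (Dae : ∀ t t', a t ≠ e t') (Dbe : ∀ t t', b t ≠ e t')
    (Dal1 : ∀ t t' m, a t ≠ l1 t' m) (Dbl1 : ∀ t t' m, b t ≠ l1 t' m)
    (Dal2 : ∀ t t' m, a t ≠ l2 t' m) (Dbl2 : ∀ t t' m, b t ≠ l2 t' m)
    (Dee : Function.Injective e)
    (Del1 : ∀ t t' m, e t ≠ l1 t' m) (Del2 : ∀ t t' m, e t ≠ l2 t' m)
    (Dl1 : ∀ t m t' m', l1 t m = l1 t' m' → t = t' ∧ m = m')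
    (Dl2 : ∀ t m t' m', l2 t m = l2 t' m' → t = t' ∧ m = m')
    (Dl1l2 : ∀ t m t' m', l1 t m ≠ l2 t' m') :
    SimpleGraph.Embedding (TGraph δ) G := by
  classical
  let f : TVert δ → V := fun x => match x with
    | TVert.handle => y
    | TVert.stem1 t => a t
    | TVert.leaf1 t m => l1 t m
    | TVert.stem2 t => b t
    | TVert.end2 t => e t
    | TVert.leaf2 t m => l2 t m
  have finj : Function.Injective f := by
    intro x x' h
    cases x <;> cases x' <;> simp only [f] at h <;>
      first
      | rfl
      | (exfalso; first
          | exact Dya _ h | exact Dya _ h.symm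
          | exact Dyb _ h | exact Dyb _ h.symm
          | exact Dye _ h | exact Dye _ h.symm
          | exact Dyl1 _ _ h | exact Dyl1 _ _ h.symm
          | exact Dyl2 _ _ h | exact Dyl2 _ _ h.symm
          | exact Dab _ _ h | exact Dab _ _ h.symm
          | exact Dae _ _ h | exact Dae _ _ h.symm
          | exact Dbe _ _ h | exact Dbe _ _ h.symm
          | exact Dal1 _ _ _ h | exact Dal1 _ _ _ h.symm
          | exact Dbl1 _ _ _ h | exact Dbl1 _ _ _ h.symm
          | exact Dal2 _ _ _ h | exact Dal2 _ _ _ h.symm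
          | exact Dbl2 _ _ _ h | exact Dbl2 _ _ _ h.symm
          | exact Del1 _ _ _ h | exact Del1 _ _ _ h.symm
          | exact Del2 _ _ _ h | exact Del2 _ _ _ h.symm
          | exact Dl1l2 _ _ _ _ h | exact Dl1l2 _ _ _ _ h.symm)
      | (rw [Daa h] )
      | (rw [Dbb h] )
      | (rw [Dee h] )
      | (obtain ⟨rfl, rfl⟩ := Dl1 _ _ _ _ h; rfl)
      | (obtain ⟨rfl, rfl⟩ := Dl2 _ _ _ _ h; rfl)
  refine ⟨⟨f, finj⟩, ?_⟩
  intro x x'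
  cases x <;> cases x' <;>
    simp only [TGraph, SimpleGraph.fromRel_adj, Function.Embedding.coeFn_mk, f] <;>
    simp <;>
    first
    | (exact fun h => (G.irrefl h).elim)
    | exact Aya _
    | exact (Aya _).symm
    | exact Ayb _
    | exact (Ayb _).symm
    | exact Nye _
    | exact fun h => Nye _ h.symm
    | exact Nyl1 _ _
    | exact fun h => Nyl1 _ _ h.symm
    | exact Nyl2 _ _
    | exact fun h => Nyl2 _ _ h.symm
    | exact Nab _ _
    | exact fun h => Nab _ _ h.symm
    | exact Nae _ _
    | exact fun h => Nae _ _ h.symm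
    | exact Nal2 _ _ _
    | exact fun h => Nal2 _ _ _ h.symm
    | exact Nbl1 _ _ _
    | exact fun h => Nbl1 _ _ _ h.symm
    | exact Nbl2 _ _ _
    | exact fun h => Nbl2 _ _ _ h.symm
    | exact Nel1 _ _ _
    | exact fun h => Nel1 _ _ _ h.symm
    | exact Nl1l2 _ _ _ _
    | exact fun h => Nl1l2 _ _ _ _ h.symm
    | (intro hadj; refine Naa _ _ ?_ hadj; intro hte; exact G.irrefl (hte ▸ hadj))
    | (intro hadj; refine Nbb _ _ ?_ hadj; intro hte; exact G.irrefl (hte ▸ hadj))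
    | (intro hadj; refine Nee _ _ ?_ hadj; intro hte; exact G.irrefl (hte ▸ hadj))
    | (intro hadj; refine Nl1l1 _ _ _ _ ?_ hadj; by_contra hc; push_neg at hc;
       obtain ⟨rfl, rfl⟩ := hc; exact G.irrefl hadj)
    | (intro hadj; refine Nl2l2 _ _ _ _ ?_ hadj; by_contra hc; push_neg at hc;
       obtain ⟨rfl, rfl⟩ := hc; exact G.irrefl hadj)
    | (constructor
       · intro h
         by_contra hc
         first
         | exact Nal1 _ _ _ hc h
         | exact Nal1 _ _ _ (fun he => hc he.symm) h
         | exact Nal1 _ _ _ hc h.symm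
         | exact Nal1 _ _ _ (fun he => hc he.symm) h.symm
         | exact Nbe _ _ hc h
         | exact Nbe _ _ (fun he => hc he.symm) h
         | exact Nbe _ _ hc h.symm
         | exact Nbe _ _ (fun he => hc he.symm) h.symm
         | exact Nel2 _ _ _ hc h
         | exact Nel2 _ _ _ (fun he => hc he.symm) h
         | exact Nel2 _ _ _ hc h.symm
         | exact Nel2 _ _ _ (fun he => hc he.symm) h.symm
       · rintro rfl
         first | exact Aal _ _ | exact (Aal _ _).symm | exact Abe _ | exact (Abe _).symm
               | exact Ael _ _ | exact (Ael _ _).symm)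


end Aux

/-- with η ≥ 1, ζ ≥ max(η,α), q,s ≥ 0, G satisfying (i)–(v), 𝒯 a 2-cleaned
(ζ,η)-template array admitting a privatization Π, B a shadowing of degree at most s
relative to U(𝒯)\Π, and a bunch of daisies of the prescribed size rooted in H_i and
avoiding Π, there is a vertex u ∈ H_i ∪ B_i adjacent to the eyes of q of the daisies and to
none of their petals. -/
theorem statement17 (τ α δ β ζ η q s : ℕ) (hα : 1 ≤ α) (hδ : 1 ≤ δ) (hβ : 2 ≤ β)
    (θ : ℕ → ℕ) (hθ : Monotone θ) (hη : 1 ≤ η) (hζ : max η α ≤ ζ)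
    (V : Type) (G : SimpleGraph V) (hG : Conditions τ α δ β θ G)
    (n : ℕ) (T : TemplateArray G α β ζ η n) (hT : T.Cleaned2)
    (Pv : Set V) (hPv : T.Privatization δ τ Pv)
    (B : Fin n → Set V) (hB : T.Shadowing B) (hdeg : T.DegreeLeRel B s (T.U \ Pv))
    (i : Fin n) (J : Set (Fin n)) (u v : Fin n → V) (P : Fin n → Set V)
    (hbunch : T.IsBunch δ B i J u v P)
    (hPvdisj : ∀ j ∈ J, insert (u j) (insert (v j) (P j)) ∩ Pv = ∅)
    (hJ : J.encard =
      ((2 * q * ζ * β * (1 + (q + s) * (δ ^ 2 + 1) + 2 * δ + δ * τ) * τ : ℕ) : ℕ∞)) :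
    ∃ w ∈ T.Hs i ∪ B i, ∃ J' ⊆ J, J'.encard = (q : ℕ∞) ∧
      ∀ j ∈ J', G.Adj w (v j) ∧ ∀ p ∈ P j, ¬ G.Adj w p := by
  classical
  obtain ⟨hfree, hchi2, hmc, hcoreθ, hnocore⟩ := hG
  obtain ⟨hiJ, hdaisy, hrootH, hPB, hdisjP, hanti, hrootpet⟩ := hbunch
  obtain ⟨hAcard, hAdisj, hAstable, hAcomplete⟩ := T.core i
  obtain ⟨hPvU, hPvmc, hPvZ, hPvdeg⟩ := hPv
  obtain ⟨hBU, hBdisj, hBunion, hBnbr⟩ := hB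
  have hζ1 : 1 ≤ ζ := le_trans (le_trans hα (le_max_right η α)) hζ
  have hηζ : η ≤ ζ := le_trans (le_max_left η α) hζ
  -- a vertex y0 in the first part of the core Y i
  have hk0 : (0 : ℕ) < β := by omega
  set k0 : Fin β := ⟨0, hk0⟩ with hk0def
  have hy0 : ∃ y0, y0 ∈ T.A i k0 := by
    rw [← Set.nonempty_def, ← Set.encard_pos, hAcard k0]
    exact_mod_cast hζ1
  obtain ⟨y0, hy0A⟩ := hy0
  have hy0Y : y0 ∈ T.Y i := Set.mem_iUnion.mpr ⟨k0, hy0A⟩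
  have hy0H : y0 ∈ T.Hs i := T.core_subset i hy0Y
  -- trivial case q = 0
  rcases Nat.eq_zero_or_pos q with rfl | hq
  · exact ⟨y0, Or.inl hy0H, ∅, Set.empty_subset _, by simp, by simp⟩
  -- main case
  by_contra hcon
  push_neg at hcon
  -- the finset of daisy indices
  set M : ℕ := 1 + (q + s) * (δ ^ 2 + 1) + 2 * δ + δ * τ with hMdef
  set N : ℕ := 2 * q * ζ * β * M * τ with hNdef
  have hJfin : J.Finite := Set.toFinite J
  set Jf : Finset (Fin n) := hJfin.toFinset with hJfdef
  have hJf : (Jf : Set (Fin n)) = J := hJfin.coe_toFinset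
  have hJfmem : ∀ j, j ∈ Jf ↔ j ∈ J := fun j => hJfin.mem_toFinset
  have hJfcard : Jf.card = N := by
    have h1 : ((Jf.card : ℕ) : ℕ∞) = (N : ℕ∞) := by
      rw [← Set.encard_coe_eq_coe_finsetCard, hJf, hJ]
    exact_mod_cast h1
  -- every vertex of Hs i ∪ B i sees at most q-1 daisies well
  have hwcard : ∀ w ∈ T.Hs i ∪ B i,
      (Jf.filter (fun j => G.Adj w (v j) ∧ ∀ p ∈ P j, ¬ G.Adj w p)).card < q := by
    intro w hw
    by_contra hge
    push_neg at hge
    obtain ⟨F, hFsub, hFcard⟩ := Finset.exists_subset_card_eq hge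
    have hFJ : (↑F : Set (Fin n)) ⊆ J := by
      intro j hj
      exact (hJfmem j).mp (Finset.filter_subset _ _ (hFsub hj))
    have hFenc : (↑F : Set (Fin n)).encard = (q : ℕ∞) := by
      rw [Set.encard_coe_eq_coe_finsetCard, hFcard]
    obtain ⟨j, hjF, hbad⟩ := hcon w hw (↑F) hFJ hFenc
    have hj2 := Finset.mem_filter.mp (hFsub hjF)
    obtain ⟨p, hp, hadj⟩ := hbad hj2.2.1
    exact hj2.2.2 p hp hadj
  -- combined bound : per vertex, few daisies have eye or petal adjacent to it
  have hbadbound : ∀ w ∈ T.Hs i ∪ B i, ∀ S : Finset (Fin n), S ⊆ Jf →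
      (S.filter (fun j => G.Adj w (v j) ∨ ∃ p ∈ P j, G.Adj w p)).card ≤ (q - 1) + s := by
    intro w hw S hS
    have hwV : w ∈ T.Vall := by
      rcases hw with h | h
      · exact Or.inl (Set.mem_iUnion.mpr ⟨i, h⟩)
      · exact Or.inr (hBU i h)
    set bad1 : Finset (Fin n) :=
      S.filter (fun j => G.Adj w (v j) ∧ ∀ p ∈ P j, ¬ G.Adj w p) with hbad1
    set bad2 : Finset (Fin n) := S.filter (fun j => ∃ p ∈ P j, G.Adj w p) with hbad2
    have hsub : S.filter (fun j => G.Adj w (v j) ∨ ∃ p ∈ P j, G.Adj w p)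
        ⊆ bad1 ∪ bad2 := by
      intro j hj
      have h1 := Finset.mem_filter.mp hj
      rcases h1.2 with h2 | h2
      · by_cases h3 : ∃ p ∈ P j, G.Adj w p
        · exact Finset.mem_union_right _ (Finset.mem_filter.mpr ⟨h1.1, h3⟩)
        · push_neg at h3
          exact Finset.mem_union_left _ (Finset.mem_filter.mpr ⟨h1.1, h2, h3⟩)
      · exact Finset.mem_union_right _ (Finset.mem_filter.mpr ⟨h1.1, h2⟩)
    have hb1 : bad1.card ≤ q - 1 := by
      have hsub1 : bad1 ⊆ Jf.filter (fun j => G.Adj w (v j) ∧ ∀ p ∈ P j, ¬ G.Adj w p) := by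
        intro j hj
        have h1 := Finset.mem_filter.mp hj
        exact Finset.mem_filter.mpr ⟨hS h1.1, h1.2⟩
      have hlt := hwcard w hw
      have hcc := Finset.card_le_card hsub1
      omega
    have hb2 : bad2.card ≤ s := by
      have hsub2 : (↑bad2 : Set (Fin n)) ⊆
          {m : Fin n | ∃ x ∈ B m ∩ (T.U \ Pv), G.Adj w x} := by
        intro j hj
        have h1 := Finset.mem_filter.mp (Finset.mem_coe.mp hj)
        obtain ⟨p, hp, hadj⟩ := h1.2
        have hjJ : j ∈ J := (hJfmem j).mp (hS h1.1)
        have hpB : p ∈ B j := hPB j hjJ hp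
        have hpU : p ∈ T.U := hBU j hpB
        have hpPv : p ∉ Pv := by
          intro hpv
          have : p ∈ insert (u j) (insert (v j) (P j)) ∩ Pv :=
            ⟨Set.mem_insert_iff.mpr (Or.inr (Set.mem_insert_iff.mpr (Or.inr hp))), hpv⟩
          rw [hPvdisj j hjJ] at this
          exact this
        exact ⟨p, ⟨hpB, hpU, hpPv⟩, hadj⟩
      have henc := le_trans (Set.encard_mono hsub2) (hdeg w hwV)
      rw [Set.encard_coe_eq_coe_finsetCard] at henc
      exact_mod_cast henc
    have := Finset.card_le_card hsub
    have := Finset.card_union_le bad1 bad2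
    omega
  -- Step B : discard daisies rooted in Y i
  set J0 : Finset (Fin n) := Jf.filter (fun j => u j ∉ T.Y i) with hJ0def
  have hpartfin : ∀ k : Fin β, (T.A i k).Finite := fun k =>
    Set.finite_of_encard_eq_coe (hAcard k)
  set Yfin : Finset V := (Finset.univ : Finset (Fin β)).biUnion
      (fun k => (hpartfin k).toFinset) with hYfindef
  have hYfinmem : ∀ x, x ∈ Yfin ↔ x ∈ T.Y i := by
    intro x
    simp only [hYfindef, Finset.mem_biUnion, Finset.mem_univ, true_and,
      Set.Finite.mem_toFinset, TemplateArray.Y, Set.mem_iUnion]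
  have hYfincard : Yfin.card ≤ β * ζ := by
    refine le_trans Finset.card_biUnion_le ?_
    have hec : ∀ k : Fin β, ((hpartfin k).toFinset).card = ζ := by
      intro k
      have h2 := (hpartfin k).encard_eq_coe_toFinset_card
      rw [hAcard k] at h2
      exact_mod_cast h2.symm
    have : ∑ k : Fin β, ((hpartfin k).toFinset).card = β * ζ := by
      rw [Finset.sum_congr rfl (fun k _ => hec k), Finset.sum_const,
        Finset.card_univ, Fintype.card_fin, smul_eq_mul]
    exact le_of_eq this
  have hB1 : Jf.card ≤ J0.card + (q - 1) * (β * ζ) := by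
    have hYr : (Jf.filter (fun j => u j ∈ T.Y i)).card ≤ (q - 1) * Yfin.card := by
      refine Finset.card_le_mul_card_image_of_maps_to
        (f := fun j => u j) (fun j hj => (hYfinmem (u j)).mpr (Finset.mem_filter.mp hj).2)
        (q - 1) ?_
      intro w hw
      show ((Jf.filter (fun j => u j ∈ T.Y i)).filter (fun j => u j = w)).card ≤ q - 1
      have hwH : w ∈ T.Hs i ∪ B i := Or.inl (T.core_subset i ((hYfinmem w).mp hw))
      have hsub : (Jf.filter (fun j => u j ∈ T.Y i)).filter (fun j => u j = w)
          ⊆ Jf.filter (fun j => G.Adj w (v j) ∧ ∀ p ∈ P j, ¬ G.Adj w p) := by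
        intro j hj
        have h1 := Finset.mem_filter.mp hj
        have h2 := Finset.mem_filter.mp h1.1
        have hjJ := (hJfmem j).mp h2.1
        have hd := hdaisy j hjJ
        refine Finset.mem_filter.mpr ⟨h2.1, ?_, ?_⟩
        · rw [← h1.2]; exact hd.2.2.2.2.2.2.1
        · intro p hp; rw [← h1.2]; exact hd.2.2.2.2.2.2.2.2.1 p hp
      have hlt := hwcard w hwH
      have hcc := Finset.card_le_card hsub
      omega
    have hsplit : (Jf.filter (fun j => u j ∈ T.Y i)).card
        + (Jf.filter (fun j => ¬ u j ∈ T.Y i)).card = Jf.card := by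
      exact Finset.card_filter_add_card_filter_not (fun j => u j ∈ T.Y i)
    have h2 : (q - 1) * Yfin.card ≤ (q - 1) * (β * ζ) :=
      Nat.mul_le_mul_left _ hYfincard
    have hJ0c : J0.card = (Jf.filter (fun j => ¬ u j ∈ T.Y i)).card := rfl
    omega
  have hJ0Z : ∀ j ∈ J0, u j ∈ T.Zall := by
    intro j hj
    have h1 := Finset.mem_filter.mp hj
    have hjJ := (hJfmem j).mp h1.1
    refine ⟨Set.mem_iUnion.mpr ⟨i, hrootH j hjJ⟩, ?_⟩
    intro hY
    obtain ⟨m, hm⟩ := Set.mem_iUnion.mp hY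
    by_cases hmi : m = i
    · exact h1.2 (hmi ▸ hm)
    · exact Set.disjoint_left.mp (T.H_disj m i hmi) (T.core_subset m hm)
        (hrootH j hjJ)
  -- Step C : a vertex y of Y i adjacent to many roots
  have hexy : ∀ j ∈ Jf, ∃ z ∈ T.Y i, G.Adj (u j) z := by
    intro j hj
    obtain ⟨-, k, hk⟩ := T.mixed i (u j) (hrootH j ((hJfmem j).mp hj))
    have hpos : (0 : ℕ∞) < (T.A i k ∩ G.neighborSet (u j)).encard :=
      lt_of_lt_of_le (by exact_mod_cast hη) hk
    obtain ⟨z, hz⟩ := Set.encard_pos.mp hpos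
    exact ⟨z, Set.mem_iUnion.mpr ⟨k, hz.1⟩, hz.2⟩
  set F0 : Fin n → V := fun j =>
    if h : ∃ z ∈ T.Y i, G.Adj (u j) z then h.choose else y0 with hF0def
  have hF0spec : ∀ j ∈ Jf, F0 j ∈ T.Y i ∧ G.Adj (u j) (F0 j) := by
    intro j hj
    have h := hexy j hj
    simp only [hF0def, dif_pos h]
    exact ⟨h.choose_spec.1, h.choose_spec.2⟩
  obtain ⟨y, hyYfin, hCpig⟩ := exists_big_fiber J0 F0 Yfin
    ⟨y0, (hYfinmem y0).mpr hy0Y⟩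
    (fun j hj => (hYfinmem _).mpr (hF0spec j (Finset.filter_subset _ _ hj)).1)
  have hyY : y ∈ T.Y i := (hYfinmem y).mp hyYfin
  have hyH : y ∈ T.Hs i := T.core_subset i hyY
  have hyYall : y ∈ T.Yall := Set.mem_iUnion.mpr ⟨i, hyY⟩
  set J1 : Finset (Fin n) := J0.filter (fun j => F0 j = y) with hJ1def
  have hC1 : J0.card ≤ (β * ζ) * J1.card :=
    le_trans hCpig (Nat.mul_le_mul_right _ hYfincard)
  have hAdjy : ∀ j ∈ J1, G.Adj (u j) y := by
    intro j hj
    rw [hJ1def] at hj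
    have h2 := (Finset.mem_filter.mp hj).2
    have := (hF0spec j (Finset.filter_subset _ _ (Finset.mem_filter.mp hj).1)).2
    rwa [h2] at this
  -- Step D : colouring of the second ball around y
  have hyB : y ∈ Ball2 G y := Or.inl rfl
  obtain ⟨C⟩ := SimpleGraph.chromaticNumber_le_iff_colorable.mp (hchi2 y)
  have hτ1 : 1 ≤ τ := (C ⟨y, hyB⟩).pos
  haveI : Nonempty (Fin τ) := ⟨C ⟨y, hyB⟩⟩
  set col : V → Fin τ := fun x =>
    if h : x ∈ Ball2 G y then C ⟨x, h⟩ else C ⟨y, hyB⟩ with hcoldef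
  have hcolprop : ∀ x ∈ Ball2 G y, ∀ x' ∈ Ball2 G y, G.Adj x x' → col x ≠ col x' := by
    intro x hx x' hx' hadj
    have : (G.induce (Ball2 G y)).Adj ⟨x, hx⟩ ⟨x', hx'⟩ := by
      simp [SimpleGraph.comap_adj, hadj]
    have := C.valid this
    simpa [hcoldef, dif_pos hx, dif_pos hx'] using this
  have hRootBall : ∀ j ∈ J1, u j ∈ Ball2 G y :=
    fun j hj => Or.inr (Or.inl (hAdjy j hj).symm)
  obtain ⟨c1, _, hDpig⟩ := exists_big_fiber J1 (fun j => col (u j))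
    (Finset.univ : Finset (Fin τ)) Finset.univ_nonempty (fun j _ => Finset.mem_univ _)
  set J2 : Finset (Fin n) := J1.filter (fun j => col (u j) = c1) with hJ2def
  have hD1 : J1.card ≤ τ * J2.card := by
    have : (Finset.univ : Finset (Fin τ)).card = τ := by simp
    rw [← this]; exact hDpig
  have hJ2sub1 : J2 ⊆ J1 := Finset.filter_subset _ _
  have hJ2nonadj : ∀ j ∈ J2, ∀ j' ∈ J2, ¬ G.Adj (u j) (u j') := by
    intro j hj j' hj' hadj
    have h1 := (Finset.mem_filter.mp hj).2
    have h2 := (Finset.mem_filter.mp hj').2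
    exact hcolprop _ (hRootBall j (hJ2sub1 hj)) _ (hRootBall j' (hJ2sub1 hj')) hadj
      (h1.trans h2.symm)
  -- Step E : make roots and eyes of distinct daisies nonadjacent
  obtain ⟨J3, hJ3sub, hE1, hJ3ind⟩ := digraph_indep
    (fun j j' => G.Adj (u j) (v j')) (q - 1) J2 (by
      intro a ha
      show (J2.filter (fun b => G.Adj (u a) (v b) ∧ b ≠ a)).card ≤ q - 1
      have haJf : a ∈ Jf := Finset.filter_subset _ _
        (Finset.filter_subset _ _ (hJ2sub1 ha))
      have haJ : a ∈ J := (hJfmem a).mp haJf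
      have hsub : J2.filter (fun b => G.Adj (u a) (v b) ∧ b ≠ a)
          ⊆ Jf.filter (fun j => G.Adj (u a) (v j) ∧ ∀ p ∈ P j, ¬ G.Adj (u a) p) := by
        intro b hb
        have h1 := Finset.mem_filter.mp hb
        have hbJf : b ∈ Jf := Finset.filter_subset _ _
          (Finset.filter_subset _ _ (hJ2sub1 h1.1))
        have hbJ : b ∈ J := (hJfmem b).mp hbJf
        refine Finset.mem_filter.mpr ⟨hbJf, h1.2.1, ?_⟩
        exact hrootpet a haJ b hbJ (fun he => h1.2.2 he.symm)
      have hlt := hwcard (u a) (Or.inl (hrootH a haJ))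
      have hcc := Finset.card_le_card hsub
      omega)
  have hJ3 : ∀ j ∈ J3, ∀ j' ∈ J3, j ≠ j' → ¬ G.Adj (u j) (v j') := hJ3ind
  -- membership chains
  have hJ3J2 : J3 ⊆ J2 := hJ3sub
  have hJ3Jf : J3 ⊆ Jf := fun j hj =>
    Finset.filter_subset _ _ (Finset.filter_subset _ _ (hJ2sub1 (hJ3J2 hj)))
  have hJ3J : ∀ j ∈ J3, j ∈ J := fun j hj => (hJfmem j).mp (hJ3Jf hj)
  have hJ3Z : ∀ j ∈ J3, u j ∈ T.Zall := fun j hj =>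
    hJ0Z j (hJ2sub1 (hJ3J2 hj) |> Finset.filter_subset _ _)
  have hJ3adjy : ∀ j ∈ J3, G.Adj (u j) y := fun j hj => hAdjy j (hJ2sub1 (hJ3J2 hj))
  have hUinj : ∀ j ∈ J3, ∀ j' ∈ J3, u j = u j' → j = j' := by
    intro j hj j' hj' he
    by_contra hne
    exact hJ3 j hj j' hj' hne (he ▸ (hdaisy j' (hJ3J j' hj')).2.2.2.2.2.2.1)
  -- cardinality : J3 has at least M elements
  have hE2 : M ≤ J3.card := by
    by_contra hlt
    push_neg at hlt
    have h1 : J3.card ≤ M - 1 := by omega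
    have h2 : J2.card ≤ (2 * (q - 1) + 1) * (M - 1) :=
      le_trans hE1 (Nat.mul_le_mul_left _ h1)
    have h3 : J1.card ≤ τ * ((2 * (q - 1) + 1) * (M - 1)) :=
      le_trans hD1 (Nat.mul_le_mul_left _ h2)
    have h4 : J0.card ≤ (β * ζ) * (τ * ((2 * (q - 1) + 1) * (M - 1))) :=
      le_trans hC1 (Nat.mul_le_mul_left _ h3)
    set X : ℕ := τ * ((2 * (q - 1) + 1) * (M - 1)) with hXdef
    have h5 : N ≤ (β * ζ) * X + (q - 1) * (β * ζ) := by omega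
    have hM1 : 1 ≤ M := by omega
    obtain ⟨a, hqa⟩ : ∃ a, q = a + 1 := ⟨q - 1, by omega⟩
    obtain ⟨b, hMb⟩ : ∃ b, M = b + 1 := ⟨M - 1, by omega⟩
    have key : X + (q - 1) + 1 ≤ 2 * q * M * τ := by
      have hsub1 : q - 1 = a := by omega
      have hsub2 : M - 1 = b := by omega
      rw [hXdef, hsub1, hsub2, hqa, hMb]
      have e1 : 2 * (a + 1) * (b + 1) * τ = τ * ((2 * a + 1) * b) + τ * (2 * a + b + 2) := by
        ring
      have e2 : a + 1 ≤ τ * (2 * a + b + 2) := by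
        calc a + 1 ≤ 2 * a + b + 2 := by omega
          _ = 1 * (2 * a + b + 2) := (one_mul _).symm
          _ ≤ τ * (2 * a + b + 2) := Nat.mul_le_mul_right _ hτ1
      omega
    have hZ2 : 2 ≤ β * ζ := by
      calc 2 = 2 * 1 := rfl
        _ ≤ β * ζ := Nat.mul_le_mul hβ hζ1
    have hNeq : N = (β * ζ) * (2 * q * M * τ) := by rw [hNdef]; ring
    have hfin : (β * ζ) * (X + (q - 1)) + (β * ζ) ≤ (β * ζ) * (2 * q * M * τ) := by
      calc (β * ζ) * (X + (q - 1)) + (β * ζ) = (β * ζ) * ((X + (q - 1)) + 1) := by ring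
        _ ≤ (β * ζ) * (2 * q * M * τ) := Nat.mul_le_mul_left _ (by omega)
    have hexp : (β * ζ) * X + (q - 1) * (β * ζ) = (β * ζ) * (X + (q - 1)) := by ring
    omega
  -- Step F : clean against y
  set J4 : Finset (Fin n) := J3.filter
      (fun j => ¬ G.Adj y (v j) ∧ ∀ p ∈ P j, ¬ G.Adj y p) with hJ4def
  have hJ4sub : J4 ⊆ J3 := Finset.filter_subset _ _
  have hJ4clean : ∀ j ∈ J4, ¬ G.Adj y (v j) ∧ ∀ p ∈ P j, ¬ G.Adj y p :=
    fun j hj => (Finset.mem_filter.mp hj).2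
  have hF1 : J3.card ≤ J4.card + ((q - 1) + s) := by
    have hsplit : (J3 \ J4).card + J4.card = J3.card :=
      Finset.card_sdiff_add_card_eq_card hJ4sub
    have hsub : J3 \ J4 ⊆ J3.filter (fun j => G.Adj y (v j) ∨ ∃ p ∈ P j, G.Adj y p) := by
      intro j hj
      have h1 := Finset.mem_sdiff.mp hj
      refine Finset.mem_filter.mpr ⟨h1.1, ?_⟩
      by_contra hc
      push_neg at hc
      exact h1.2 (Finset.mem_filter.mpr ⟨h1.1, hc.1, hc.2⟩)
    have hbb := hbadbound y (Or.inl hyH) J3 hJ3Jf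
    have := Finset.card_le_card hsub
    omega
  have hJ4card : 2 + (q + s) * δ ^ 2 + 2 * δ + δ * τ ≤ J4.card := by
    have hexp : (q + s) * (δ ^ 2 + 1) = (q + s) * δ ^ 2 + (q + s) := by ring
    have := hF1
    have := hE2
    omega
  -- private neighbours of roots
  set Q : Fin n → Finset V := fun j =>
    if h : (Pv ∩ G.neighborSet (u j)).encard = ((δ * τ : ℕ) : ℕ∞)
    then (Set.finite_of_encard_eq_coe h).toFinset else ∅ with hQdef
  have hQmem : ∀ j, ∀ x ∈ Q j, x ∈ Pv ∧ G.Adj (u j) x := by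
    intro j x hx
    simp only [hQdef] at hx
    split_ifs at hx with h
    · have := (Set.Finite.mem_toFinset _).mp hx
      exact ⟨this.1, this.2⟩
    · simp at hx
  have hQcard : ∀ j ∈ J3, (Q j).card = δ * τ := by
    intro j hj
    have h := hPvdeg (u j) (hJ3Z j hj)
    simp only [hQdef]
    rw [dif_pos h]
    have h2 := (Set.finite_of_encard_eq_coe h).encard_eq_coe_toFinset_card
    rw [h] at h2
    exact_mod_cast h2.symm
  have hQball : ∀ j ∈ J3, ∀ x ∈ Q j, x ∈ Ball2 G y := by
    intro j hj x hx
    exact Or.inr (Or.inr ⟨u j, (hJ3adjy j hj).symm, (hQmem j x hx).2⟩)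
  -- Step G : choose the stems of the (1,δ)-brooms
  have hC0ex : (δ - 1) * τ + 1 ≤ J4.card := by
    have : (δ - 1) * τ + 1 ≤ δ * τ + 1 := by
      have : (δ - 1) * τ ≤ δ * τ := Nat.mul_le_mul_right _ (by omega)
      omega
    omega
  obtain ⟨C0, hC0sub, hC0card⟩ := Finset.exists_subset_card_eq hC0ex
  have hgood : ∀ j ∈ C0, ∃ c : Fin τ, δ ≤ ((Q j).filter (fun x => col x = c)).card := by
    intro j hj
    have hjJ3 : j ∈ J3 := hJ4sub (hC0sub hj)
    have hQc := hQcard j hjJ3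
    by_contra hc
    push_neg at hc
    have hsum : (Q j).card = ∑ c : Fin τ, ((Q j).filter (fun x => col x = c)).card :=
      Finset.card_eq_sum_card_fiberwise (fun x _ => Finset.mem_univ (col x))
    have hsum2 : ∑ c : Fin τ, ((Q j).filter (fun x => col x = c)).card
        ≤ ∑ _c : Fin τ, (δ - 1) :=
      Finset.sum_le_sum (fun c _ => by have := hc c; omega)
    have hsum3 : ∑ _c : Fin τ, (δ - 1) = τ * (δ - 1) := by
      rw [Finset.sum_const, Finset.card_univ, Fintype.card_fin, smul_eq_mul]
    have hcm : δ * τ = τ * δ := Nat.mul_comm _ _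
    have hτδ : τ * (δ - 1) + τ = τ * δ := by
      have h1 : (δ - 1) + 1 = δ := by omega
      calc τ * (δ - 1) + τ = τ * ((δ - 1) + 1) := by ring
        _ = τ * δ := by rw [h1]
    omega
  set g : Fin n → Fin τ := fun j =>
    if h : ∃ c : Fin τ, δ ≤ ((Q j).filter (fun x => col x = c)).card
    then h.choose else c1 with hgdef
  have hgspec : ∀ j ∈ C0, δ ≤ ((Q j).filter (fun x => col x = g j)).card := by
    intro j hj
    have h := hgood j hj
    simp only [hgdef, dif_pos h]
    exact h.choose_spec
  obtain ⟨c2, _, hGpig⟩ := exists_big_fiber C0 g (Finset.univ : Finset (Fin τ))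
    Finset.univ_nonempty (fun j _ => Finset.mem_univ _)
  set C1 : Finset (Fin n) := C0.filter (fun j => g j = c2) with hC1def
  have hC1card : δ ≤ C1.card := by
    have huniv : (Finset.univ : Finset (Fin τ)).card = τ := by simp
    rw [huniv, hC0card] at hGpig
    by_contra hlt
    push_neg at hlt
    have : τ * C1.card ≤ τ * (δ - 1) := Nat.mul_le_mul_left τ (by omega)
    have h2 : (δ - 1) * τ + 1 ≤ τ * (δ - 1) := le_trans hGpig this
    rw [Nat.mul_comm] at h2
    omega
  obtain ⟨D0, hD0sub, hD0card⟩ := Finset.exists_subset_card_eq hC1card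
  have hD0C2 : ∀ j ∈ D0, δ ≤ ((Q j).filter (fun x => col x = c2)).card := by
    intro j hj
    have h1 := (Finset.mem_filter.mp (hD0sub hj)).2
    have := hgspec j (Finset.filter_subset _ _ (hD0sub hj))
    rwa [h1] at this
  set Lf : Fin n → Finset V := fun j =>
    if h : δ ≤ ((Q j).filter (fun x => col x = c2)).card
    then (Finset.exists_subset_card_eq h).choose else ∅ with hLfdef
  have hLfspec : ∀ j ∈ D0, Lf j ⊆ (Q j).filter (fun x => col x = c2) ∧ (Lf j).card = δ := by
    intro j hj
    have h := hD0C2 j hj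
    simp only [hLfdef, dif_pos h]
    exact ⟨(Finset.exists_subset_card_eq h).choose_spec.1,
      (Finset.exists_subset_card_eq h).choose_spec.2⟩
  set Lall : Finset V := D0.biUnion Lf with hLalldef
  have hD0J4 : D0 ⊆ J4 := fun j hj =>
    hC0sub (Finset.filter_subset _ _ (hD0sub hj))
  have hD0J3 : D0 ⊆ J3 := fun j hj => hJ4sub (hD0J4 hj)
  -- basic facts about leaves
  have hLfQ : ∀ j ∈ D0, ∀ x ∈ Lf j, x ∈ Pv ∧ G.Adj (u j) x ∧ col x = c2 := by
    intro j hj x hx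
    have h1 := (hLfspec j hj).1 hx
    have h2 := Finset.mem_filter.mp h1
    exact ⟨(hQmem j x h2.1).1, (hQmem j x h2.1).2, h2.2⟩
  -- unique Z-neighbour of a private vertex
  have hUniqZ : ∀ x ∈ Pv, ∀ z ∈ T.Zall, G.Adj x z → T.Zall ∩ G.neighborSet x = {z} := by
    intro x hx z hz hadj
    obtain ⟨w, hw⟩ := Set.encard_eq_one.mp (hPvZ x hx).1
    have hzmem : z ∈ T.Zall ∩ G.neighborSet x := ⟨hz, hadj⟩
    rw [hw] at hzmem ⊢
    rw [Set.mem_singleton_iff.mp hzmem]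
  -- each leaf is in B i
  have hLeafBi : ∀ x ∈ Pv, ∀ z ∈ T.Zall, z ∈ T.Hs i → G.Adj x z → x ∈ B i := by
    intro x hx z hz hzH hadj
    have hxU : x ∈ T.U := hPvU hx
    have hxB : x ∈ ⋃ m, B m := hBunion.symm ▸ hxU
    obtain ⟨m, hm⟩ := Set.mem_iUnion.mp hxB
    obtain ⟨u', hu'H, hadj'⟩ := hBnbr m x hm
    have hu'Z : u' ∈ T.Zall :=
      ⟨Set.mem_iUnion.mpr ⟨m, hu'H⟩, fun hY => (hPvZ x hx).2 u' hY hadj'⟩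
    have huniq := hUniqZ x hx z hz hadj
    have hu'mem : u' ∈ T.Zall ∩ G.neighborSet x := ⟨hu'Z, hadj'⟩
    rw [huniq] at hu'mem
    have hu'z : u' = z := hu'mem
    have hmi : m = i := by
      by_contra hne
      exact Set.disjoint_left.mp (T.H_disj m i hne) (hu'z ▸ hu'H) hzH
    exact hmi ▸ hm
  have hLallB : ∀ x ∈ Lall, x ∈ Pv ∧ x ∈ B i ∧ x ∈ T.U ∧ x ∈ Ball2 G y ∧ col x = c2 := by
    intro x hx
    obtain ⟨j, hjD0, hxLf⟩ := Finset.mem_biUnion.mp hx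
    obtain ⟨hxPv, hadj, hcolx⟩ := hLfQ j hjD0 x hxLf
    have hjJ3 : j ∈ J3 := hD0J3 hjD0
    refine ⟨hxPv, ?_, hPvU hxPv, ?_, hcolx⟩
    · exact hLeafBi x hxPv (u j) (hJ3Z j hjJ3) (hrootH j (hJ3J j hjJ3)) hadj.symm
    · exact hQball j hjJ3 x (Finset.mem_of_mem_filter x ((hLfspec j hjD0).1 hxLf))
  -- Step H : choose the (2,δ)-broom daisies
  set J5 : Finset (Fin n) := J4 \ C0 with hJ5def
  have hJ5card : 1 + (q + s) * δ ^ 2 + 2 * δ + τ ≤ J5.card := by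
    have hc : J5.card = J4.card - C0.card := Finset.card_sdiff_of_subset hC0sub
    have hτδ : (δ - 1) * τ + τ = δ * τ := by
      have : (δ - 1) * τ + 1 * τ = ((δ - 1) + 1) * τ := (Nat.add_mul _ _ _).symm
      simp only [one_mul] at this
      rw [this]
      congr 1
      omega
    omega
  set J6 : Finset (Fin n) := J5.filter
      (fun j => ∀ x ∈ Lall, ¬ G.Adj x (v j) ∧ ∀ p ∈ P j, ¬ G.Adj x p) with hJ6def
  have hLallcard : Lall.card ≤ δ * δ := by
    refine le_trans (Finset.card_biUnion_le) ?_
    have hsum : ∑ j ∈ D0, (Lf j).card = ∑ _j ∈ D0, δ :=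
      Finset.sum_congr rfl (fun j hj => (hLfspec j hj).2)
    rw [hsum, Finset.sum_const, smul_eq_mul, hD0card]
  have hH1 : J5.card ≤ J6.card + δ * δ * ((q - 1) + s) := by
    have hJ6sub : J6 ⊆ J5 := Finset.filter_subset _ _
    have hsplit : (J5 \ J6).card + J6.card = J5.card :=
      Finset.card_sdiff_add_card_eq_card hJ6sub
    have hsub : J5 \ J6 ⊆ Lall.biUnion
        (fun x => J5.filter (fun j => G.Adj x (v j) ∨ ∃ p ∈ P j, G.Adj x p)) := by
      intro j hj
      have h1 := Finset.mem_sdiff.mp hj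
      have h2 : ¬ (∀ x ∈ Lall, ¬ G.Adj x (v j) ∧ ∀ p ∈ P j, ¬ G.Adj x p) := by
        intro hall
        exact h1.2 (Finset.mem_filter.mpr ⟨h1.1, hall⟩)
      push_neg at h2
      obtain ⟨x, hxL, hxbad⟩ := h2
      refine Finset.mem_biUnion.mpr ⟨x, hxL, Finset.mem_filter.mpr ⟨h1.1, ?_⟩⟩
      by_cases hc : G.Adj x (v j)
      · exact Or.inl hc
      · right
        obtain ⟨p, hp, hpadj⟩ := hxbad hc
        exact ⟨p, hp, hpadj⟩
    have hJ5Jf : J5 ⊆ Jf := fun j hj =>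
      hJ3Jf (hJ4sub (Finset.sdiff_subset hj))
    have hper : ∀ x ∈ Lall,
        (J5.filter (fun j => G.Adj x (v j) ∨ ∃ p ∈ P j, G.Adj x p)).card
          ≤ (q - 1) + s := by
      intro x hxL
      exact hbadbound x (Or.inr (hLallB x hxL).2.1) J5 hJ5Jf
    have hbi : (Lall.biUnion
        (fun x => J5.filter (fun j => G.Adj x (v j) ∨ ∃ p ∈ P j, G.Adj x p))).card
          ≤ δ * δ * ((q - 1) + s) := by
      refine le_trans Finset.card_biUnion_le ?_
      calc ∑ x ∈ Lall, (J5.filter (fun j => G.Adj x (v j) ∨ ∃ p ∈ P j, G.Adj x p)).card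
          ≤ ∑ _x ∈ Lall, ((q - 1) + s) := Finset.sum_le_sum hper
        _ = Lall.card * ((q - 1) + s) := by rw [Finset.sum_const, smul_eq_mul]
        _ ≤ δ * δ * ((q - 1) + s) := Nat.mul_le_mul_right _ hLallcard
    have := Finset.card_le_card hsub
    omega
  have hJ6card : δ ≤ J6.card := by
    have key : δ * δ * ((q - 1) + s) + δ * δ = δ * δ * (q + s) := by
      have h1 : (q - 1) + s + 1 = q + s := by omega
      calc δ * δ * ((q - 1) + s) + δ * δ = δ * δ * ((q - 1) + s + 1) := by ring
        _ = δ * δ * (q + s) := by rw [h1]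
    have hEC : (q + s) * δ ^ 2 = δ * δ * (q + s) := by ring
    have hδ2 : δ ≤ δ * δ := Nat.le_mul_of_pos_left δ (by omega)
    omega
  obtain ⟨E0, hE0sub, hE0card⟩ := Finset.exists_subset_card_eq hJ6card
  have hE0J5 : E0 ⊆ J5 := fun j hj => Finset.filter_subset _ _ (hE0sub hj)
  have hE0J4 : E0 ⊆ J4 := fun j hj => Finset.sdiff_subset (hE0J5 hj)
  have hE0J3 : E0 ⊆ J3 := fun j hj => hJ4sub (hE0J4 hj)
  have hDE : ∀ j ∈ D0, ∀ j' ∈ E0, j ≠ j' := by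
    intro j hj j' hj' he
    have h1 : j' ∈ C0 := he ▸ Finset.filter_subset _ _ (hD0sub hj)
    have h2 := (Finset.mem_sdiff.mp (hE0J5 hj')).2
    exact h2 h1
  -- petal finsets
  set Pf : Fin n → Finset V := fun j =>
    if h : (P j).encard = ((δ : ℕ) : ℕ∞)
    then (Set.finite_of_encard_eq_coe h).toFinset else ∅ with hPfdef
  have hPfmem : ∀ j, ∀ x ∈ Pf j, x ∈ P j := by
    intro j x hx
    simp only [hPfdef] at hx
    split_ifs at hx with h
    · exact (Set.Finite.mem_toFinset _).mp hx
    · simp at hx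
  have hPfcard : ∀ j ∈ J3, (Pf j).card = δ := by
    intro j hj
    have h := (hdaisy j (hJ3J j hj)).2.2.1
    simp only [hPfdef]
    rw [dif_pos h]
    have h2 := (Set.finite_of_encard_eq_coe h).encard_eq_coe_toFinset_card
    rw [h] at h2
    exact_mod_cast h2.symm
  -- Step J : build an induced copy of T(δ), contradiction with T(δ)-freeness
  set da : Fin δ → Fin n := pickFin D0 hD0card with hdadef
  set db : Fin δ → Fin n := pickFin E0 hE0card with hdbdef
  have hdaD : ∀ t, da t ∈ D0 := fun t => pickFin_mem D0 hD0card t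
  have hdbE : ∀ t, db t ∈ E0 := fun t => pickFin_mem E0 hE0card t
  have hdainj : Function.Injective da := pickFin_inj D0 hD0card
  have hdbinj : Function.Injective db := pickFin_inj E0 hE0card
  have hdaJ4 : ∀ t, da t ∈ J4 := fun t => hD0J4 (hdaD t)
  have hdbJ4 : ∀ t, db t ∈ J4 := fun t => hE0J4 (hdbE t)
  have hdaJ3 : ∀ t, da t ∈ J3 := fun t => hJ4sub (hdaJ4 t)
  have hdbJ3 : ∀ t, db t ∈ J3 := fun t => hJ4sub (hdbJ4 t)
  have hdaJ : ∀ t, da t ∈ J := fun t => hJ3J _ (hdaJ3 t)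
  have hdbJ : ∀ t, db t ∈ J := fun t => hJ3J _ (hdbJ3 t)
  have hdadb : ∀ t t', da t ≠ db t' := fun t t' => hDE _ (hdaD t) _ (hdbE t')
  have hdbJ6 : ∀ t, db t ∈ J6 := fun t => hE0sub (hdbE t)
  have hJ6clean : ∀ t, ∀ x ∈ Lall, ¬ G.Adj x (v (db t)) ∧ ∀ p ∈ P (db t), ¬ G.Adj x p :=
    fun t => (Finset.mem_filter.mp (hdbJ6 t)).2
  -- the vertices of the tree
  set av : Fin δ → V := fun t => u (da t) with havdef
  set bv : Fin δ → V := fun t => u (db t) with hbvdef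
  set ev : Fin δ → V := fun t => v (db t) with hevdef
  have hl1card : ∀ t, (Lf (da t)).card = δ := fun t => (hLfspec (da t) (hdaD t)).2
  set l1v : Fin δ → Fin δ → V := fun t m => pickFin (Lf (da t)) (hl1card t) m with hl1def
  have hl2card : ∀ t, (Pf (db t)).card = δ := fun t => hPfcard (db t) (hdbJ3 t)
  set l2v : Fin δ → Fin δ → V := fun t m => pickFin (Pf (db t)) (hl2card t) m with hl2def
  -- basic membership facts
  have hl1mem : ∀ t m, l1v t m ∈ Lf (da t) := fun t m => pickFin_mem _ (hl1card t) m
  have hl1fact : ∀ t m, l1v t m ∈ Pv ∧ G.Adj (u (da t)) (l1v t m) ∧ col (l1v t m) = c2 :=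
    fun t m => hLfQ (da t) (hdaD t) _ (hl1mem t m)
  have hl1Lall : ∀ t m, l1v t m ∈ Lall :=
    fun t m => Finset.mem_biUnion.mpr ⟨da t, hdaD t, hl1mem t m⟩
  have hl1B : ∀ t m, l1v t m ∈ Pv ∧ l1v t m ∈ B i ∧ l1v t m ∈ T.U ∧
      l1v t m ∈ Ball2 G y ∧ col (l1v t m) = c2 := fun t m => hLallB _ (hl1Lall t m)
  have hl2P : ∀ t m, l2v t m ∈ P (db t) := fun t m => hPfmem _ _ (pickFin_mem _ (hl2card t) m)
  have hl2U : ∀ t m, l2v t m ∈ T.U := fun t m => hBU (db t) (hPB (db t) (hdbJ t) (hl2P t m))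
  have heU : ∀ t, ev t ∈ T.U := fun t => (hdaisy (db t) (hdbJ t)).2.1
  have hevPv : ∀ t, ev t ∉ Pv := by
    intro t hpv
    have : v (db t) ∈ insert (u (db t)) (insert (v (db t)) (P (db t))) ∩ Pv :=
      ⟨Set.mem_insert_iff.mpr (Or.inr (Set.mem_insert_iff.mpr (Or.inl rfl))), hpv⟩
    rw [hPvdisj (db t) (hdbJ t)] at this
    exact this
  have hl2Pv : ∀ t m, l2v t m ∉ Pv := by
    intro t m hpv
    have : l2v t m ∈ insert (u (db t)) (insert (v (db t)) (P (db t))) ∩ Pv :=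
      ⟨Set.mem_insert_iff.mpr (Or.inr (Set.mem_insert_iff.mpr (Or.inr (hl2P t m)))), hpv⟩
    rw [hPvdisj (db t) (hdbJ t)] at this
    exact this
  -- nonadjacency of a private leaf to the other roots
  have hl1Znbr : ∀ t m, ∀ j ∈ J3, u j ≠ u (da t) → ¬ G.Adj (u j) (l1v t m) := by
    intro t m j hj hne hadj
    have huniq := hUniqZ (l1v t m) (hl1fact t m).1 (u (da t)) (hJ3Z _ (hdaJ3 t))
      (hl1fact t m).2.1.symm
    have : u j ∈ T.Zall ∩ G.neighborSet (l1v t m) := ⟨hJ3Z j hj, hadj.symm⟩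
    rw [huniq] at this
    exact hne this
  -- injectivity of roots as vertices
  have hrinj : ∀ j ∈ J3, ∀ j' ∈ J3, j ≠ j' → u j ≠ u j' :=
    fun j hj j' hj' hne he => hne (hUinj j hj j' hj' he)
  -- eyes distinct and anticomplete
  have heyene : ∀ j ∈ J, ∀ j' ∈ J, j ≠ j' → v j ≠ v j' := by
    intro j hj j' hj' hne he
    have hd := hdisjP j hj j' hj' hne
    exact Set.disjoint_left.mp hd (Set.mem_union_right _ rfl)
      (he ▸ Set.mem_union_right _ rfl)
  -- daisy accessors
  have hAdjuv : ∀ j ∈ J, G.Adj (u j) (v j) := fun j hj => (hdaisy j hj).2.2.2.2.2.2.1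
  have hAdjvp : ∀ j ∈ J, ∀ p ∈ P j, G.Adj (v j) p :=
    fun j hj => (hdaisy j hj).2.2.2.2.2.2.2.1
  have hNup : ∀ j ∈ J, ∀ p ∈ P j, ¬ G.Adj (u j) p :=
    fun j hj => (hdaisy j hj).2.2.2.2.2.2.2.2.1
  have hPstable : ∀ j ∈ J, ∀ p ∈ P j, ∀ p' ∈ P j, ¬ G.Adj p p' :=
    fun j hj => (hdaisy j hj).2.2.2.2.2.2.2.2.2
  have hvnotP : ∀ j ∈ J, v j ∉ P j := fun j hj => (hdaisy j hj).2.2.2.2.1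
  -- colour-class nonadjacency for the leaves
  have hl1l1 : ∀ t m t' m', ¬ G.Adj (l1v t m) (l1v t' m') := by
    intro t m t' m' hadj
    exact hcolprop _ (hl1B t m).2.2.2.1 _ (hl1B t' m').2.2.2.1 hadj
      ((hl1B t m).2.2.2.2.trans (hl1B t' m').2.2.2.2.symm)
  -- roots are not in Yall, leaves/eyes/petals are in U hence not in Hs
  have hUnotH : ∀ x ∈ T.U, x ∉ T.Hs i := fun x hx => T.U_not_H x hx i
  -- now build the embedding
  have hemb : SimpleGraph.Embedding (TGraph δ) G := by
    refine tgraph_embedding G δ y av bv ev l1v l2v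
      (fun t => (hJ3adjy _ (hdaJ3 t)).symm)
      (fun t m => (hl1fact t m).2.1)
      (fun t => (hJ3adjy _ (hdbJ3 t)).symm)
      (fun t => hAdjuv _ (hdbJ t))
      (fun t m => hAdjvp _ (hdbJ t) _ (hl2P t m))
      ?_ ?_ ?_ ?_ ?_ ?_ ?_ ?_ ?_ ?_ ?_ ?_ ?_ ?_ ?_ ?_ ?_ ?_ ?_
      ?_ ?_ ?_ ?_ ?_ ?_ ?_ ?_ ?_ ?_ ?_ ?_ ?_ ?_ ?_ ?_ ?_ ?_ ?_
    · -- Nyl1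
      intro t m hadj
      exact (hPvZ _ (hl1fact t m).1).2 y hyYall hadj.symm
    · -- Nye
      intro t hadj
      exact ((Finset.mem_filter.mp (hdbJ4 t)).2).1 hadj
    · -- Nyl2
      intro t m hadj
      exact ((Finset.mem_filter.mp (hdbJ4 t)).2).2 _ (hl2P t m) hadj
    · -- Naa
      intro t t' _ hadj
      exact hJ2nonadj _ (hJ3J2 (hdaJ3 t)) _ (hJ3J2 (hdaJ3 t')) hadj
    · -- Nab
      intro t t' hadj
      exact hJ2nonadj _ (hJ3J2 (hdaJ3 t)) _ (hJ3J2 (hdbJ3 t')) hadj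
    · -- Nae
      intro t t' hadj
      exact hJ3 _ (hdaJ3 t) _ (hdbJ3 t') (hdadb t t') hadj
    · -- Nal1
      intro t t' m hne hadj
      exact hl1Znbr t' m (da t) (hdaJ3 t)
        (hrinj _ (hdaJ3 t) _ (hdaJ3 t') (fun he => hne (hdainj he))) hadj
    · -- Nal2
      intro t t' m hadj
      exact hrootpet (da t) (hdaJ t) (db t') (hdbJ t') (hdadb t t') _ (hl2P t' m) hadj
    · -- Nbb
      intro t t' _ hadj
      exact hJ2nonadj _ (hJ3J2 (hdbJ3 t)) _ (hJ3J2 (hdbJ3 t')) hadj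
    · -- Nbe
      intro t t' hne hadj
      exact hJ3 _ (hdbJ3 t) _ (hdbJ3 t') (fun he => hne (hdbinj he)) hadj
    · -- Nbl1
      intro t t' m hadj
      exact hl1Znbr t' m (db t) (hdbJ3 t)
        (hrinj _ (hdbJ3 t) _ (hdaJ3 t') (Ne.symm (hdadb t' t))) hadj
    · -- Nbl2
      intro t t' m hadj
      by_cases hte : t = t'
      · exact hNup (db t) (hdbJ t) _ (hte ▸ hl2P t' m) hadj
      · exact hrootpet (db t) (hdbJ t) (db t') (hdbJ t')
          (fun he => hte (hdbinj he)) _ (hl2P t' m) hadj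
    · -- Nee
      intro t t' hne hadj
      exact hanti (db t) (hdbJ t) (db t') (hdbJ t') (fun he => hne (hdbinj he))
        _ (Set.mem_union_right _ rfl) _ (Set.mem_union_right _ rfl) hadj
    · -- Nel1
      intro t t' m hadj
      exact (hJ6clean t _ (hl1Lall t' m)).1 hadj.symm
    · -- Nel2
      intro t t' m hne hadj
      exact hanti (db t) (hdbJ t) (db t') (hdbJ t') (fun h => hne (hdbinj h))
        _ (Set.mem_union_right _ rfl) _ (Set.mem_union_left _ (hl2P t' m)) hadj
    · -- Nl1l1
      intro t m t' m' _ hadj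
      exact hl1l1 t m t' m' hadj
    · -- Nl1l2
      intro t m t' m' hadj
      exact (hJ6clean t' _ (hl1Lall t m)).2 _ (hl2P t' m') hadj
    · -- Nl2l2
      intro t m t' m' hne hadj
      by_cases hte : t = t'
      · exact hPstable (db t) (hdbJ t) _ (hl2P t m) _ (hte ▸ hl2P t' m') hadj
      · exact hanti (db t) (hdbJ t) (db t') (hdbJ t') (fun he => hte (hdbinj he))
          _ (Set.mem_union_left _ (hl2P t m)) _ (Set.mem_union_left _ (hl2P t' m')) hadj
    · -- Dya
      intro t he
      have he' : y = u (da t) := he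
      exact (hJ3Z _ (hdaJ3 t)).2 (he' ▸ hyYall)
    · -- Dyb
      intro t he
      have he' : y = u (db t) := he
      exact (hJ3Z _ (hdbJ3 t)).2 (he' ▸ hyYall)
    · -- Dye
      intro t he
      exact hUnotH _ (heU t) (he ▸ hyH)
    · -- Dyl1
      intro t m he
      exact hUnotH _ (hl1B t m).2.2.1 (he ▸ hyH)
    · -- Dyl2
      intro t m he
      exact hUnotH _ (hl2U t m) (he ▸ hyH)
    · -- Daa
      intro t t' he
      exact hdainj (hUinj _ (hdaJ3 t) _ (hdaJ3 t') he)
    · -- Dbb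
      intro t t' he
      exact hdbinj (hUinj _ (hdbJ3 t) _ (hdbJ3 t') he)
    · -- Dab
      intro t t' he
      exact hdadb t t' (hUinj _ (hdaJ3 t) _ (hdbJ3 t') he)
    · -- Dae
      intro t t' he
      exact hUnotH _ (heU t') (he ▸ hrootH _ (hdaJ t))
    · -- Dbe
      intro t t' he
      exact hUnotH _ (heU t') (he ▸ hrootH _ (hdbJ t))
    · -- Dal1
      intro t t' m he
      exact hUnotH _ (hl1B t' m).2.2.1 (he ▸ hrootH _ (hdaJ t))
    · -- Dbl1
      intro t t' m he
      exact hUnotH _ (hl1B t' m).2.2.1 (he ▸ hrootH _ (hdbJ t))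
    · -- Dal2
      intro t t' m he
      exact hUnotH _ (hl2U t' m) (he ▸ hrootH _ (hdaJ t))
    · -- Dbl2
      intro t t' m he
      exact hUnotH _ (hl2U t' m) (he ▸ hrootH _ (hdbJ t))
    · -- Dee
      intro t t' he
      have he' : v (db t) = v (db t') := he
      by_contra hne
      exact heyene (db t) (hdbJ t) (db t') (hdbJ t')
        (fun h => hne (hdbinj h)) he'
    · -- Del1
      intro t t' m he
      exact hevPv t (he ▸ (hl1fact t' m).1)
    · -- Del2
      intro t t' m he
      have he' : v (db t) = l2v t' m := he
      by_cases hte : t = t'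
      · subst hte
        exact hvnotP (db t) (hdbJ t) (he' ▸ hl2P t m)
      · exact Set.disjoint_left.mp
          (hdisjP (db t) (hdbJ t) (db t') (hdbJ t') (fun h => hte (hdbinj h)))
          (Set.mem_union_right _ rfl) (he' ▸ Set.mem_union_left _ (hl2P t' m))
    · -- Dl1
      intro t m t' m' he
      by_cases hte : t = t'
      · subst hte
        exact ⟨rfl, pickFin_inj _ (hl1card t) he⟩
      · exfalso
        have h1 := hl1fact t m
        have h2 := hl1fact t' m'
        have huniq := hUniqZ (l1v t m) h1.1 (u (da t)) (hJ3Z _ (hdaJ3 t)) h1.2.1.symm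
        have : u (da t') ∈ T.Zall ∩ G.neighborSet (l1v t m) :=
          ⟨hJ3Z _ (hdaJ3 t'), (he ▸ h2.2.1).symm⟩
        rw [huniq] at this
        exact hte (hdainj (hUinj _ (hdaJ3 t') _ (hdaJ3 t) this)).symm
    · -- Dl2
      intro t m t' m' he
      by_cases hte : t = t'
      · subst hte
        exact ⟨rfl, pickFin_inj _ (hl2card t) he⟩
      · exfalso
        exact Set.disjoint_left.mp
          (hdisjP (db t) (hdbJ t) (db t') (hdbJ t') (fun h => hte (hdbinj h)))
          (Set.mem_union_left _ (hl2P t m))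
          (he ▸ Set.mem_union_left _ (hl2P t' m'))
    · -- Dl1l2
      intro t m t' m' he
      exact hl2Pv t' m' (he ▸ (hl1fact t m).1)
  exact hfree.false hemb
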